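/- Let A = F_q[T] and let P(x) = x^2 - c·x + μ·P^m with μ ∈ F_q^*, P irreducible of degree d, c ∈ A with c not divisible by P and deg c ≤ md/2. If θ is a root of P(x) in an algebraic closure of K = F_q(T), then θ is integral over A, θ is not a unit of the integral closure, the extension K(θ)/K has degree 2, and the infinite valuation satisfies v_∞(θ) = -md/2 (equivalently |θ|_∞ = q^{md/2}). -/

import Mathlib

open Polynomial IntermediateField

noncomputable section
set_option synthInstance.maxHeartbeats 1000000
set_option maxHeartbeats 1000000

variable (Fq : Type) [Field Fq] [Fintype Fq]

open scoped Classical in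
/-- The `∞`-absolute value on `K = F_q(T)`: `|r|_∞ = q^(deg num - deg den)`. -/
def absInfty (r : RatFunc Fq) : ℝ :=
  if r = 0 then 0 else (Fintype.card Fq : ℝ) ^ (r.intDegree)

instance : Algebra (Polynomial Fq) (AlgebraicClosure (RatFunc Fq)) :=
  ((algebraMap (RatFunc Fq) (AlgebraicClosure (RatFunc Fq))).comp
    (algebraMap (Polynomial Fq) (RatFunc Fq))).toAlgebra

instance : @IsScalarTower (Polynomial Fq) (RatFunc Fq) (AlgebraicClosure (RatFunc Fq))
    Algebra.toSMul Algebra.toSMul Algebra.toSMul :=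
  IsScalarTower.of_algebraMap_eq' rfl

variable {Fq}

/-- Key arithmetic half-lemma. -/
lemma weil_half {P c : Polynomial Fq} (hP : Irreducible P) {d m : ℕ}
    (hd : P.natDegree = d) (hm : 0 < m) (μ : Fqˣ) (hc : ¬ P ∣ c)
    (hdeg : 2 * c.natDegree ≤ m * d)
    {s t : Polynomial Fq} (hmul : s * t = (μ : Fq) • P ^ m) (hadd : s + t = c)
    (hdvd : P ∣ s) : False := by
  have hPprime : Prime P := UniqueFactorizationMonoid.irreducible_iff_prime.mp hP
  have hP0 : P ≠ 0 := hP.ne_zero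
  have hd1 : 0 < d := hd ▸ hP.natDegree_pos
  have hμ0 : (μ : Fq) ≠ 0 := μ.ne_zero
  have ht : ¬ P ∣ t := fun h => hc (hadd ▸ dvd_add hdvd h)
  have hpm : P ^ m ∣ s := by
    refine hPprime.pow_dvd_of_dvd_mul_right m ht ?_
    rw [hmul, smul_eq_C_mul]
    exact dvd_mul_left _ _
  obtain ⟨u, rfl⟩ := hpm
  have hPm0 : P ^ m ≠ 0 := pow_ne_zero _ hP0
  have hut : u * t = C (μ : Fq) := by
    have : P ^ m * (u * t) = P ^ m * C (μ : Fq) := by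
      rw [← mul_assoc, hmul, smul_eq_C_mul]; ring
    exact mul_left_cancel₀ hPm0 this
  have hCμ : IsUnit (C (μ : Fq)) := Polynomial.isUnit_C.mpr μ.isUnit
  have hu : IsUnit u := isUnit_of_mul_isUnit_left (hut ▸ hCμ)
  have htunit : IsUnit t := isUnit_of_mul_isUnit_right (hut ▸ hCμ)
  have hu0 : u ≠ 0 := hu.ne_zero
  have hdu : u.natDegree = 0 := natDegree_eq_zero_of_isUnit hu
  have hdt : t.natDegree = 0 := natDegree_eq_zero_of_isUnit htunit
  have hds : (P ^ m * u).natDegree = m * d := by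
    rw [natDegree_mul hPm0 hu0, natDegree_pow, hd, hdu, add_zero]
  have hmd : 0 < m * d := Nat.mul_pos hm hd1
  have hdc : c.natDegree = m * d := by
    rw [← hadd, natDegree_add_eq_left_of_natDegree_lt (by omega)]
    exact hds
  omega

/-- No root in `A = Fq[T]`. -/
lemma weil_no_A_root {P c : Polynomial Fq} (hP : Irreducible P) {d m : ℕ}
    (hd : P.natDegree = d) (hm : 0 < m) (μ : Fqˣ) (hc : ¬ P ∣ c)
    (hdeg : 2 * c.natDegree ≤ m * d)
    (s : Polynomial Fq) (h : s ^ 2 - c * s + (μ : Fq) • P ^ m = 0) : False := by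
  have hPprime : Prime P := UniqueFactorizationMonoid.irreducible_iff_prime.mp hP
  have hmul : s * (c - s) = (μ : Fq) • P ^ m := by linear_combination -h
  have hadd : s + (c - s) = c := by ring
  have hdvd : P ∣ s * (c - s) := by
    rw [hmul, smul_eq_C_mul]
    exact dvd_mul_of_dvd_right (dvd_pow_self P hm.ne') _
  rcases hPprime.dvd_mul.mp hdvd with h1 | h1
  · exact weil_half hP hd hm μ hc hdeg hmul hadd h1
  · exact weil_half (s := c - s) (t := s) hP hd hm μ hc hdeg
      (by linear_combination hmul) (by ring) h1

set_option linter.unusedSectionVars false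

lemma weil_isIntegral (P c : Polynomial Fq) (m : ℕ) (μ : Fqˣ)
    (θ : AlgebraicClosure (RatFunc Fq))
    (hθ : θ ^ 2 - algebraMap (Polynomial Fq) _ c * θ
        + algebraMap (Polynomial Fq) _ ((μ : Fq) • P ^ m) = 0) :
    IsIntegral (Polynomial Fq) θ := by
  refine ⟨X ^ 2 - (C c * X - C ((μ : Fq) • P ^ m)), monic_X_pow_sub ?_, ?_⟩
  · refine lt_of_le_of_lt (degree_sub_le _ _) ?_
    rw [max_lt_iff]
    constructor
    · exact lt_of_le_of_lt (degree_C_mul_X_le c) (by decide)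
    · exact lt_of_le_of_lt (degree_C_le) (by decide)
  · simp only [eval₂_sub, eval₂_mul, eval₂_pow, eval₂_X, eval₂_C]
    linear_combination hθ

lemma weil_not_mem_range {P c : Polynomial Fq} (hP : Irreducible P) {d m : ℕ}
    (hd : P.natDegree = d) (hm : 0 < m) (μ : Fqˣ) (hc : ¬ P ∣ c)
    (hdeg : 2 * c.natDegree ≤ m * d)
    {θ : AlgebraicClosure (RatFunc Fq)}
    (hθ : θ ^ 2 - algebraMap (Polynomial Fq) _ c * θ
        + algebraMap (Polynomial Fq) _ ((μ : Fq) • P ^ m) = 0) :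
    θ ∉ (algebraMap (RatFunc Fq) (AlgebraicClosure (RatFunc Fq))).range := by
  rintro ⟨r, rfl⟩
  have hint : IsIntegral (Polynomial Fq) (algebraMap (RatFunc Fq) _ r) :=
    weil_isIntegral P c m μ _ hθ
  have hr : IsIntegral (Polynomial Fq) r := by
    rwa [isIntegral_algebraMap_iff
      ((algebraMap (RatFunc Fq) (AlgebraicClosure (RatFunc Fq))).injective)] at hint
  obtain ⟨s, rfl⟩ := IsIntegrallyClosed.isIntegral_iff.mp hr
  have key : algebraMap (Polynomial Fq) (AlgebraicClosure (RatFunc Fq))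
      (s ^ 2 - c * s + (μ : Fq) • P ^ m) = 0 := by
    rw [map_add, map_sub, map_mul, map_pow]
    exact hθ
  have hinj : Function.Injective
      (algebraMap (Polynomial Fq) (AlgebraicClosure (RatFunc Fq))) :=
    (algebraMap (RatFunc Fq) (AlgebraicClosure (RatFunc Fq))).injective.comp
      (IsFractionRing.injective (Polynomial Fq) (RatFunc Fq))
  have : s ^ 2 - c * s + (μ : Fq) • P ^ m = 0 := by
    apply hinj; rw [key, map_zero]
  exact weil_no_A_root hP hd hm μ hc hdeg s this

lemma weil_minpoly_natDegree {P c : Polynomial Fq} (hP : Irreducible P) {d m : ℕ}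
    (hd : P.natDegree = d) (hm : 0 < m) (μ : Fqˣ) (hc : ¬ P ∣ c)
    (hdeg : 2 * c.natDegree ≤ m * d)
    {θ : AlgebraicClosure (RatFunc Fq)}
    (hθ : θ ^ 2 - algebraMap (Polynomial Fq) _ c * θ
        + algebraMap (Polynomial Fq) _ ((μ : Fq) • P ^ m) = 0) :
    (minpoly (RatFunc Fq) θ).natDegree = 2 := by
  have hKint : IsIntegral (RatFunc Fq) θ := Algebra.IsIntegral.isIntegral θ
  set g : Polynomial (RatFunc Fq) :=
    X ^ 2 - C (algebraMap (Polynomial Fq) (RatFunc Fq) c) * X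
      + C (algebraMap (Polynomial Fq) (RatFunc Fq) ((μ : Fq) • P ^ m)) with hg
  have hgθ : Polynomial.aeval θ g = 0 := by
    simp only [hg, map_add, map_sub, map_mul, map_pow, aeval_X, aeval_C]
    rw [← IsScalarTower.algebraMap_apply, ← IsScalarTower.algebraMap_apply]
    exact hθ
  have hdvd : minpoly (RatFunc Fq) θ ∣ g := minpoly.dvd _ _ hgθ
  have hgdeg : g.natDegree = 2 := by
    rw [hg]
    compute_degree!
  have hg0 : g ≠ 0 := fun h => by simp [h] at hgdeg
  have hle : (minpoly (RatFunc Fq) θ).natDegree ≤ 2 :=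
    hgdeg ▸ natDegree_le_of_dvd hdvd hg0
  have hpos : 0 < (minpoly (RatFunc Fq) θ).natDegree := minpoly.natDegree_pos hKint
  have hne1 : (minpoly (RatFunc Fq) θ).natDegree ≠ 1 := by
    intro h1
    exact weil_not_mem_range hP hd hm μ hc hdeg hθ (minpoly.natDegree_eq_one_iff.mp h1)
  omega

lemma weil_not_unit {P c : Polynomial Fq} (hP : Irreducible P) {d m : ℕ}
    (hd : P.natDegree = d) (hm : 0 < m) (μ : Fqˣ) (hc : ¬ P ∣ c)
    (hdeg : 2 * c.natDegree ≤ m * d)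
    {θ : AlgebraicClosure (RatFunc Fq)}
    (hθ : θ ^ 2 - algebraMap (Polynomial Fq) _ c * θ
        + algebraMap (Polynomial Fq) _ ((μ : Fq) • P ^ m) = 0)
    (hmem : θ ∈ integralClosure (Polynomial Fq) (AlgebraicClosure (RatFunc Fq)))
    (h : IsUnit (⟨θ, hmem⟩ : integralClosure (Polynomial Fq) (AlgebraicClosure (RatFunc Fq)))) :
    False := by
  obtain ⟨u, hu⟩ := h
  set τ : AlgebraicClosure (RatFunc Fq) :=
    ((↑u⁻¹ : integralClosure (Polynomial Fq) (AlgebraicClosure (RatFunc Fq))) :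
      AlgebraicClosure (RatFunc Fq)) with hτdef
  have hτmul : θ * τ = 1 := by
    have h1 : (u : integralClosure (Polynomial Fq) (AlgebraicClosure (RatFunc Fq)))
        * (↑u⁻¹ : integralClosure (Polynomial Fq) (AlgebraicClosure (RatFunc Fq))) = 1 :=
      u.mul_inv
    rw [hu] at h1
    have := congrArg
      (fun x : integralClosure (Polynomial Fq) (AlgebraicClosure (RatFunc Fq)) =>
        (x : AlgebraicClosure (RatFunc Fq))) h1
    simpa using this
  have hτint : IsIntegral (Polynomial Fq) τ :=
    (↑u⁻¹ : integralClosure (Polynomial Fq) (AlgebraicClosure (RatFunc Fq))).2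
  have hθ0 : θ ≠ 0 := fun h0 => by simp [h0] at hτmul
  have hτ0 : τ ≠ 0 := fun h0 => by simp [h0] at hτmul
  have hθnotin := weil_not_mem_range hP hd hm μ hc hdeg hθ
  have hτnotin : τ ∉ (algebraMap (RatFunc Fq) (AlgebraicClosure (RatFunc Fq))).range := by
    rintro ⟨r, hr⟩
    have hr0 : r ≠ 0 := fun h0 => hτ0 (by rw [← hr, h0, map_zero])
    refine hθnotin ⟨r⁻¹, ?_⟩
    have hτinv : θ = τ⁻¹ := eq_inv_of_mul_eq_one_left hτmul
    rw [hτinv, ← hr, map_inv₀]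
  have haA0 : ((μ : Fq) • P ^ m : Polynomial Fq) ≠ 0 :=
    smul_ne_zero (Units.ne_zero μ) (pow_ne_zero _ hP.ne_zero)
  set aK : RatFunc Fq := algebraMap (Polynomial Fq) (RatFunc Fq) ((μ : Fq) • P ^ m) with haK
  set cK : RatFunc Fq := algebraMap (Polynomial Fq) (RatFunc Fq) c with hcK
  have haK0 : aK ≠ 0 := fun h0 => haA0 (IsFractionRing.injective (Polynomial Fq) (RatFunc Fq)
    (by rw [map_zero]; exact h0))
  set q : Polynomial (RatFunc Fq) := X ^ 2 - (C (cK / aK) * X - C (1 / aK)) with hq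
  have haL : algebraMap (RatFunc Fq) (AlgebraicClosure (RatFunc Fq)) aK
      = algebraMap (Polynomial Fq) (AlgebraicClosure (RatFunc Fq)) ((μ : Fq) • P ^ m) := rfl
  have hcL : algebraMap (RatFunc Fq) (AlgebraicClosure (RatFunc Fq)) cK
      = algebraMap (Polynomial Fq) (AlgebraicClosure (RatFunc Fq)) c := rfl
  have hθ' : θ ^ 2 - algebraMap (RatFunc Fq) (AlgebraicClosure (RatFunc Fq)) cK * θ
      + algebraMap (RatFunc Fq) (AlgebraicClosure (RatFunc Fq)) aK = 0 := hθ
  have haL0' : algebraMap (RatFunc Fq) (AlgebraicClosure (RatFunc Fq)) aK ≠ 0 :=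
    fun h0 => haK0 ((algebraMap (RatFunc Fq) (AlgebraicClosure (RatFunc Fq))).injective
      (h0.trans (map_zero _).symm))
  have hqτ : Polynomial.aeval τ q = 0 := by
    simp only [hq, map_sub, map_mul, map_pow, aeval_X, aeval_C, map_div₀, map_one]
    have hτeq : τ = θ⁻¹ := eq_inv_of_mul_eq_one_left (by rw [mul_comm]; exact hτmul)
    rw [hτeq]
    field_simp
    linear_combination hθ'
  have hKτint : IsIntegral (RatFunc Fq) τ := Algebra.IsIntegral.isIntegral τ
  have hdvd : minpoly (RatFunc Fq) τ ∣ q := minpoly.dvd _ _ hqτ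
  have hqmonic : q.Monic := by
    refine monic_X_pow_sub (lt_of_le_of_lt (degree_sub_le _ _) ?_)
    rw [max_lt_iff]
    exact ⟨lt_of_le_of_lt (degree_C_mul_X_le _) (by decide),
      lt_of_le_of_lt degree_C_le (by decide)⟩
  have hq2 : q.natDegree = 2 := by rw [hq]; compute_degree!
  have hq0 : q ≠ 0 := hqmonic.ne_zero
  have hτdeg : (minpoly (RatFunc Fq) τ).natDegree = 2 := by
    have hle : (minpoly (RatFunc Fq) τ).natDegree ≤ 2 := hq2 ▸ natDegree_le_of_dvd hdvd hq0
    have hpos : 0 < (minpoly (RatFunc Fq) τ).natDegree := minpoly.natDegree_pos hKτint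
    have hne1 : (minpoly (RatFunc Fq) τ).natDegree ≠ 1 := fun h1 =>
      hτnotin (minpoly.natDegree_eq_one_iff.mp h1)
    omega
  have heq : minpoly (RatFunc Fq) τ = q := by
    obtain ⟨k, hk⟩ := hdvd
    have hmp : (minpoly (RatFunc Fq) τ).Monic := minpoly.monic hKτint
    have hkm : k.Monic := hmp.of_mul_monic_left (hk ▸ hqmonic)
    have hk0 : k.natDegree = 0 := by
      have h5 := hk ▸ hq2
      rw [natDegree_mul hmp.ne_zero hkm.ne_zero, hτdeg] at h5
      omega
    rw [hk, hkm.natDegree_eq_zero.mp hk0, mul_one]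
  have hfrac : minpoly (RatFunc Fq) τ
      = (minpoly (Polynomial Fq) τ).map (algebraMap (Polynomial Fq) (RatFunc Fq)) :=
    minpoly.isIntegrallyClosed_eq_field_fractions' (RatFunc Fq) hτint
  have hcoeff : (1 : RatFunc Fq) / aK
      = algebraMap (Polynomial Fq) (RatFunc Fq) ((minpoly (Polynomial Fq) τ).coeff 0) := by
    have h1 : q.coeff 0 = 1 / aK := by
      simp [hq, coeff_sub, coeff_C, coeff_X, coeff_C_mul, coeff_X_pow]
    rw [← h1, ← heq, hfrac, coeff_map]
  have hunit : IsUnit ((μ : Fq) • P ^ m : Polynomial Fq) := by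
    have h2 : algebraMap (Polynomial Fq) (RatFunc Fq)
        (((μ : Fq) • P ^ m) * (minpoly (Polynomial Fq) τ).coeff 0) = 1 := by
      rw [map_mul, ← hcoeff, ← haK, mul_one_div_cancel haK0]
    have h3 : ((μ : Fq) • P ^ m : Polynomial Fq) * (minpoly (Polynomial Fq) τ).coeff 0 = 1 :=
      IsFractionRing.injective (Polynomial Fq) (RatFunc Fq) (by rw [h2, map_one])
    exact (Units.mkOfMulEqOne _ _ h3).isUnit
  rw [smul_eq_C_mul] at hunit
  exact hP.not_isUnit ((isUnit_pow_iff hm.ne').mp (isUnit_of_mul_isUnit_right hunit))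

lemma absInfty_poly_eq {p : Polynomial Fq} (hp : p ≠ 0) :
    absInfty Fq (algebraMap (Polynomial Fq) (RatFunc Fq) p)
      = (Fintype.card Fq : ℝ) ^ p.natDegree := by
  have h0 : algebraMap (Polynomial Fq) (RatFunc Fq) p ≠ 0 :=
    fun h => hp (IsFractionRing.injective (Polynomial Fq) (RatFunc Fq)
      (h.trans (map_zero _).symm))
  rw [absInfty, if_neg h0, RatFunc.intDegree_polynomial, zpow_natCast]

lemma absInfty_poly_le (p : Polynomial Fq) :
    absInfty Fq (algebraMap (Polynomial Fq) (RatFunc Fq) p)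
      ≤ (Fintype.card Fq : ℝ) ^ p.natDegree := by
  by_cases hp : p = 0
  · subst hp
    rw [map_zero, absInfty, if_pos rfl]
    positivity
  · rw [absInfty_poly_eq hp]

lemma absInfty_natCast_le_one (n : ℕ) : absInfty Fq (n : RatFunc Fq) ≤ 1 := by
  by_cases h0 : (n : RatFunc Fq) = 0
  · rw [absInfty, if_pos h0]; norm_num
  · rw [absInfty, if_neg h0]
    have : ((n : RatFunc Fq)) = RatFunc.C (n : Fq) := (map_natCast RatFunc.C n).symm
    rw [this, RatFunc.intDegree_C, zpow_zero]

lemma weil_nonarch {F : Type*} [Field F] (w : AbsoluteValue F ℝ)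
    (hn : ∀ n : ℕ, w (n : F) ≤ 1) (x y : F) : w (x + y) ≤ max (w x) (w y) := by
  set M := max (w x) (w y) with hM
  have hM0 : 0 ≤ M := (w.nonneg x).trans (le_max_left _ _)
  have key : ∀ n : ℕ, w (x + y) ^ n ≤ (n + 1 : ℝ) * M ^ n := by
    intro n
    calc w (x + y) ^ n = w ((x + y) ^ n) := (map_pow w _ n).symm
      _ = w (∑ k ∈ Finset.range (n + 1), x ^ k * y ^ (n - k) * (n.choose k : F)) := by
          rw [add_pow]
      _ ≤ ∑ k ∈ Finset.range (n + 1), w (x ^ k * y ^ (n - k) * (n.choose k : F)) :=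
          w.sum_le _ _
      _ ≤ ∑ _k ∈ Finset.range (n + 1), M ^ n := by
          apply Finset.sum_le_sum
          intro k hk
          have hk' : k ≤ n := Nat.lt_succ_iff.mp (Finset.mem_range.mp hk)
          rw [map_mul, map_mul, map_pow, map_pow]
          calc w x ^ k * w y ^ (n - k) * w ((n.choose k : F))
              ≤ M ^ k * M ^ (n - k) * 1 := by
                have h1 : w x ^ k ≤ M ^ k := pow_le_pow_left₀ (w.nonneg x) (le_max_left _ _) k
                have h2 : w y ^ (n - k) ≤ M ^ (n - k) :=
                  pow_le_pow_left₀ (w.nonneg y) (le_max_right _ _) _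
                have h3 := hn (n.choose k)
                have h4 : (0:ℝ) ≤ w ((n.choose k : F)) := w.nonneg _
                have h5 : (0:ℝ) ≤ M ^ k := pow_nonneg hM0 k
                have h6 : (0:ℝ) ≤ w x ^ k := pow_nonneg (w.nonneg x) k
                have h7 : (0:ℝ) ≤ w y ^ (n-k) := pow_nonneg (w.nonneg y) _
                exact mul_le_mul (mul_le_mul h1 h2 h7 h5) h3 h4
                  (mul_nonneg h5 (pow_nonneg hM0 _))
            _ = M ^ n := by rw [mul_one, ← pow_add]; congr 1; omega
      _ = (n + 1 : ℝ) * M ^ n := by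
          rw [Finset.sum_const, Finset.card_range, nsmul_eq_mul]
          push_cast; ring
  by_contra hcon
  push_neg at hcon
  rcases hM0.lt_or_eq with hMpos | hMzero
  · set r := w (x + y) / M with hr
    have hr1 : 1 < r := (one_lt_div hMpos).mpr hcon
    have hrn : ∀ n : ℕ, r ^ n ≤ (n + 1 : ℝ) := by
      intro n
      rw [hr, div_pow, div_le_iff₀ (pow_pos hMpos n)]
      exact key n
    set δ := r - 1 with hδdef
    have hδ : 0 < δ := by simp [hδdef]; linarith
    obtain ⟨N, hN⟩ := exists_nat_gt (2 / δ ^ 2)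
    have hNpos : (0:ℝ) < N := lt_trans (by positivity) hN
    have hbern : (1 : ℝ) + N * δ ≤ (1 + δ) ^ N := one_add_mul_le_pow (by linarith) N
    have h2N : r ^ (2 * N) ≤ (2 * N + 1 : ℝ) := by
      have := hrn (2 * N)
      push_cast at this ⊢
      linarith
    have hrδ : r = 1 + δ := by rw [hδdef]; ring
    have hsq : (1 + N * δ) ^ 2 ≤ (2 * N + 1 : ℝ) := by
      calc (1 + N * δ) ^ 2 ≤ ((1 + δ) ^ N) ^ 2 := by
            apply pow_le_pow_left₀ (by positivity) hbern
        _ = r ^ (2 * N) := by rw [← hrδ, ← pow_mul, Nat.mul_comm]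
        _ ≤ (2 * N + 1 : ℝ) := h2N
    have hNδ : 2 < N * δ ^ 2 := (div_lt_iff₀ (by positivity)).mp hN
    nlinarith [mul_pos hNpos hδ, sq_nonneg (N * δ), mul_pos hNpos hNpos]
  · -- M = 0
    have hx : x = 0 := w.eq_zero.mp (le_antisymm
      (hMzero ▸ le_max_left (w x) (w y)) (w.nonneg x))
    have hy : y = 0 := w.eq_zero.mp (le_antisymm
      (hMzero ▸ le_max_right (w x) (w y)) (w.nonneg y))
    rw [hx, hy, add_zero, map_zero] at hcon
    exact absurd hcon (not_lt_of_ge hM0)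

lemma weil_abs_value {P c : Polynomial Fq} (hP : Irreducible P) {d m : ℕ}
    (hd : P.natDegree = d) (hm : 0 < m) (μ : Fqˣ) (hc : ¬ P ∣ c)
    (hdeg : 2 * c.natDegree ≤ m * d)
    {θ : AlgebraicClosure (RatFunc Fq)}
    (hθ : θ ^ 2 - algebraMap (Polynomial Fq) _ c * θ
        + algebraMap (Polynomial Fq) _ ((μ : Fq) • P ^ m) = 0)
    (w : AbsoluteValue (IntermediateField.adjoin (RatFunc Fq) {θ}) ℝ)
    (hw : ∀ x : RatFunc Fq,
      w (algebraMap (RatFunc Fq) (IntermediateField.adjoin (RatFunc Fq) {θ}) x) = absInfty Fq x) :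
    w (IntermediateField.AdjoinSimple.gen (RatFunc Fq) θ)
      = ((Fintype.card Fq : ℝ) ^ (m * d : ℕ)) ^ ((1 : ℝ) / 2) := by
  have haA0 : ((μ : Fq) • P ^ m : Polynomial Fq) ≠ 0 :=
    smul_ne_zero (Units.ne_zero μ) (pow_ne_zero _ hP.ne_zero)
  have hc0 : c ≠ 0 := fun h => hc (h ▸ dvd_zero P)
  set aK : RatFunc Fq := algebraMap (Polynomial Fq) (RatFunc Fq) ((μ : Fq) • P ^ m) with haK
  set cK : RatFunc Fq := algebraMap (Polynomial Fq) (RatFunc Fq) c with hcK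
  set t := IntermediateField.AdjoinSimple.gen (RatFunc Fq) θ with hts
  have hθ' : θ ^ 2 - algebraMap (RatFunc Fq) (AlgebraicClosure (RatFunc Fq)) cK * θ
      + algebraMap (RatFunc Fq) (AlgebraicClosure (RatFunc Fq)) aK = 0 := hθ
  have grel : t ^ 2 - algebraMap (RatFunc Fq) ((RatFunc Fq)⟮θ⟯) cK * t + algebraMap (RatFunc Fq) ((RatFunc Fq)⟮θ⟯) aK = 0 := by
    apply (algebraMap ((RatFunc Fq)⟮θ⟯) (AlgebraicClosure (RatFunc Fq))).injective
    rw [map_zero, map_add, map_sub, map_mul, map_pow, IntermediateField.AdjoinSimple.algebraMap_gen,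
      ← IsScalarTower.algebraMap_apply, ← IsScalarTower.algebraMap_apply]
    exact hθ'
  -- basic positivity facts
  have q1 : (1 : ℝ) < (Fintype.card Fq : ℝ) := by
    exact_mod_cast Fintype.one_lt_card
  set s : ℝ := ((Fintype.card Fq : ℝ) ^ (m * d : ℕ)) ^ ((1 : ℝ) / 2) with hsdef
  have hY0 : (0 : ℝ) < (Fintype.card Fq : ℝ) ^ (m * d : ℕ) := by positivity
  have hs0 : 0 < s := by rw [hsdef]; positivity
  have hss : s * s = (Fintype.card Fq : ℝ) ^ (m * d : ℕ) := by
    rw [hsdef, ← Real.rpow_add hY0]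
    norm_num
  have sq_le : ∀ a b : ℝ, 0 ≤ a → 0 < b → a * a ≤ b * b → a ≤ b := by
    intro a b ha hb h; nlinarith
  -- bounds on polynomial images
  have hwpoly : ∀ p : Polynomial Fq,
      w (algebraMap (RatFunc Fq) ((RatFunc Fq)⟮θ⟯) (algebraMap (Polynomial Fq) (RatFunc Fq) p))
        ≤ (Fintype.card Fq : ℝ) ^ p.natDegree := by
    intro p; rw [hw]; exact absInfty_poly_le p
  have hwc : w (algebraMap (RatFunc Fq) ((RatFunc Fq)⟮θ⟯) cK) ≤ s := by
    refine sq_le _ _ (w.nonneg _) hs0 ?_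
    have h1 : w (algebraMap (RatFunc Fq) ((RatFunc Fq)⟮θ⟯) cK)
        ≤ (Fintype.card Fq : ℝ) ^ c.natDegree := hwpoly c
    have h2 : ((Fintype.card Fq : ℝ) ^ c.natDegree) * ((Fintype.card Fq : ℝ) ^ c.natDegree)
        ≤ s * s := by
      rw [hss, ← pow_add]
      exact pow_le_pow_right₀ q1.le (by omega)
    have h3 : (0:ℝ) ≤ w (algebraMap (RatFunc Fq) ((RatFunc Fq)⟮θ⟯) cK) := w.nonneg _
    nlinarith [h1]
  have hdegaA : ((μ : Fq) • P ^ m : Polynomial Fq).natDegree = m * d := by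
    rw [smul_eq_C_mul, natDegree_C_mul (Units.ne_zero μ), natDegree_pow, hd]
  have hwa : w (algebraMap (RatFunc Fq) ((RatFunc Fq)⟮θ⟯) aK) = s * s := by
    have h1 : absInfty Fq (algebraMap (Polynomial Fq) (RatFunc Fq) ((μ : Fq) • P ^ m))
        = s * s := by
      rw [absInfty_poly_eq haA0, hdegaA, hss]
    rw [hw]
    exact h1
  -- nonarchimedean property
  have hnat : ∀ n : ℕ, w (n : ((RatFunc Fq)⟮θ⟯)) ≤ 1 := by
    intro n
    rw [show ((n : ((RatFunc Fq)⟮θ⟯))) = algebraMap (RatFunc Fq) ((RatFunc Fq)⟮θ⟯) ((n : RatFunc Fq)) from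
      (map_natCast _ n).symm, hw]
    exact absInfty_natCast_le_one n
  have hna : ∀ u v : ((RatFunc Fq)⟮θ⟯), w (u + v) ≤ max (w u) (w v) := weil_nonarch w hnat
  -- the two roots
  set x := w t with hx
  set y := w (algebraMap (RatFunc Fq) ((RatFunc Fq)⟮θ⟯) cK - t) with hy
  have hθ0 : θ ≠ 0 := by
    intro h0
    apply haA0
    have hinj : Function.Injective
        (algebraMap (Polynomial Fq) (AlgebraicClosure (RatFunc Fq))) :=
      (algebraMap (RatFunc Fq) (AlgebraicClosure (RatFunc Fq))).injective.comp
        (IsFractionRing.injective (Polynomial Fq) (RatFunc Fq))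
    apply hinj
    rw [map_zero]
    rw [h0] at hθ
    simpa using hθ
  have ht0 : t ≠ 0 := fun h => hθ0
    (by rw [← IntermediateField.AdjoinSimple.algebraMap_gen (RatFunc Fq) θ,
      show IntermediateField.AdjoinSimple.gen (RatFunc Fq) θ = 0 from h, map_zero])
  have hx0 : 0 < x := w.pos ht0
  have hxy : x * y = s * s := by
    have hprod : t * (algebraMap (RatFunc Fq) ((RatFunc Fq)⟮θ⟯) cK - t) = algebraMap (RatFunc Fq) ((RatFunc Fq)⟮θ⟯) aK := by
      linear_combination -grel
    have h9 : w (t * (algebraMap (RatFunc Fq) ((RatFunc Fq)⟮θ⟯) cK - t))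
        = s * s := by rw [hprod, hwa]
    rw [map_mul] at h9
    exact h9
  have hy0 : 0 < y := by
    rcases (w.nonneg (algebraMap (RatFunc Fq) ((RatFunc Fq)⟮θ⟯) cK - t)).lt_or_eq with h | h
    · exact h
    · exfalso
      have hy'' : y = 0 := h.symm
      rw [hy'', mul_zero] at hxy
      nlinarith
  -- x ≤ s
  have hxle : x ≤ s := by
    have h2 : t ^ 2 = algebraMap (RatFunc Fq) ((RatFunc Fq)⟮θ⟯) cK * t + (- algebraMap (RatFunc Fq) ((RatFunc Fq)⟮θ⟯) aK) := by
      linear_combination grel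
    have h3 : x ^ 2 ≤ max (w (algebraMap (RatFunc Fq) ((RatFunc Fq)⟮θ⟯) cK) * x) (s * s) := by
      calc x ^ 2 = w (t ^ 2) := (map_pow w t 2).symm
        _ = w (algebraMap (RatFunc Fq) ((RatFunc Fq)⟮θ⟯) cK * t + (- algebraMap (RatFunc Fq) ((RatFunc Fq)⟮θ⟯) aK)) := by
            rw [h2]
        _ ≤ max (w (algebraMap (RatFunc Fq) ((RatFunc Fq)⟮θ⟯) cK * t)) (w (- algebraMap (RatFunc Fq) ((RatFunc Fq)⟮θ⟯) aK)) :=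
            hna _ _
        _ = max (w (algebraMap (RatFunc Fq) ((RatFunc Fq)⟮θ⟯) cK) * x) (s * s) := by
            rw [map_mul, w.map_neg, hwa, ← hx]
    rcases max_cases (w (algebraMap (RatFunc Fq) ((RatFunc Fq)⟮θ⟯) cK) * x) (s * s) with ⟨hmx, _⟩ | ⟨hmx, _⟩
    · rw [hmx] at h3
      have h4 : x * x ≤ s * x := by
        calc x * x = x ^ 2 := (sq x).symm
          _ ≤ w (algebraMap (RatFunc Fq) ((RatFunc Fq)⟮θ⟯) cK) * x := h3
          _ ≤ s * x := mul_le_mul_of_nonneg_right hwc hx0.le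
      exact le_of_mul_le_mul_right (by linarith [h4]) hx0
    · rw [hmx] at h3
      exact sq_le _ _ hx0.le hs0 (by nlinarith)
  -- y ≤ s
  have hyle : y ≤ s := by
    have h2 : (algebraMap (RatFunc Fq) ((RatFunc Fq)⟮θ⟯) cK - t) ^ 2
        = algebraMap (RatFunc Fq) ((RatFunc Fq)⟮θ⟯) cK * (algebraMap (RatFunc Fq) ((RatFunc Fq)⟮θ⟯) cK - t)
          + (- algebraMap (RatFunc Fq) ((RatFunc Fq)⟮θ⟯) aK) := by
      linear_combination grel
    have h3 : y ^ 2 ≤ max (w (algebraMap (RatFunc Fq) ((RatFunc Fq)⟮θ⟯) cK) * y) (s * s) := by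
      calc y ^ 2 = w ((algebraMap (RatFunc Fq) ((RatFunc Fq)⟮θ⟯) cK - t) ^ 2) := (map_pow w _ 2).symm
        _ ≤ max (w (algebraMap (RatFunc Fq) ((RatFunc Fq)⟮θ⟯) cK * (algebraMap (RatFunc Fq) ((RatFunc Fq)⟮θ⟯) cK - t)))
              (w (- algebraMap (RatFunc Fq) ((RatFunc Fq)⟮θ⟯) aK)) := by rw [h2]; exact hna _ _
        _ = max (w (algebraMap (RatFunc Fq) ((RatFunc Fq)⟮θ⟯) cK) * y) (s * s) := by
            rw [map_mul, w.map_neg, hwa, ← hy]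
    rcases max_cases (w (algebraMap (RatFunc Fq) ((RatFunc Fq)⟮θ⟯) cK) * y) (s * s) with ⟨hmx, _⟩ | ⟨hmx, _⟩
    · rw [hmx] at h3
      have h4 : y * y ≤ s * y := by
        calc y * y = y ^ 2 := (sq y).symm
          _ ≤ w (algebraMap (RatFunc Fq) ((RatFunc Fq)⟮θ⟯) cK) * y := h3
          _ ≤ s * y := mul_le_mul_of_nonneg_right hwc hy0.le
      exact le_of_mul_le_mul_right (by linarith [h4]) hy0
    · rw [hmx] at h3
      exact sq_le _ _ hy0.le hs0 (by nlinarith)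
  -- conclude
  have hfin : x = s := by nlinarith
  exact hfin

variable (Fq)

/-- Let `A = F_q[T]`, `P` monic irreducible of degree `d`, `m ≥ 1`, `μ ∈ F_qˣ`,
`c ∈ A` with `P ∤ c` and `deg c ≤ md/2`.  If `θ` is a root of `x² - c·x + μ·P^m`
in an algebraic closure of `K = F_q(T)`, then `θ` is integral over `A`, `θ` is not
a unit of the integral closure of `A`, `[K(θ):K] = 2`, and every absolute value on
`K(θ)` extending `|·|_∞` satisfies `|θ|_∞ = q^(md/2)`. -/
theorem weil_root_properties
    (P : Polynomial Fq) (hP : Irreducible P) (hPm : P.Monic)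
    (d m : ℕ) (hd : P.natDegree = d) (hm : 0 < m)
    (μ : Fqˣ) (c : Polynomial Fq) (hc : ¬ P ∣ c) (hdeg : 2 * c.natDegree ≤ m * d)
    (θ : AlgebraicClosure (RatFunc Fq))
    (hθ : θ ^ 2 - algebraMap (Polynomial Fq) _ c * θ
        + algebraMap (Polynomial Fq) _ ((μ : Fq) • P ^ m) = 0) :
    IsIntegral (Polynomial Fq) θ ∧
    (∀ hmem : θ ∈ integralClosure (Polynomial Fq) (AlgebraicClosure (RatFunc Fq)),
      ¬ IsUnit (⟨θ, hmem⟩ : integralClosure (Polynomial Fq) (AlgebraicClosure (RatFunc Fq)))) ∧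
    Module.finrank (RatFunc Fq) (IntermediateField.adjoin (RatFunc Fq) {θ}) = 2 ∧
    (∀ w : AbsoluteValue (IntermediateField.adjoin (RatFunc Fq) {θ}) ℝ,
      (∀ x : RatFunc Fq,
        w (algebraMap (RatFunc Fq) (IntermediateField.adjoin (RatFunc Fq) {θ}) x) = absInfty Fq x) →
      w (IntermediateField.AdjoinSimple.gen (RatFunc Fq) θ)
        = ((Fintype.card Fq : ℝ) ^ (m * d : ℕ)) ^ ((1 : ℝ) / 2)) := by
  refine ⟨weil_isIntegral P c m μ θ hθ, ?_, ?_, ?_⟩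
  · intro hmem h
    exact weil_not_unit hP hd hm μ hc hdeg hθ hmem h
  · have hKint : IsIntegral (RatFunc Fq) θ := Algebra.IsIntegral.isIntegral θ
    rw [IntermediateField.adjoin.finrank hKint]
    exact weil_minpoly_natDegree hP hd hm μ hc hdeg hθ
  · intro w hw
    exact weil_abs_value hP hd hm μ hc hdeg hθ w hw

end
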